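/- Let $(a_1,\dots,a_m)$ be a telescopic sequence with gap sequence $w_1<\cdots<w_g$. Define the partition $\mu=(w_g-(g-1),\,w_{g-1}-(g-2),\,\dots,\,w_1-0)$. Then the Young diagram of $\mu$ is symmetric, i.e., $\mu$ equals its conjugate (transpose) partition. -/

import Mathlib

/-- `dseq a i = gcd(a 1, …, a i)`. -/
def dseq (a : ℕ → ℕ) (i : ℕ) : ℕ := Finset.gcd (Finset.Icc 1 i) a

/-- membership in the numerical semigroup generated by `a 1, …, a m`. -/
def InSemigroup (m : ℕ) (a : ℕ → ℕ) (x : ℕ) : Prop :=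
  ∃ c : ℕ → ℕ, x = ∑ i ∈ Finset.Icc 1 m, c i * a i

/-- `(a 1, …, a m)` is a telescopic sequence. -/
def Telescopic (m : ℕ) (a : ℕ → ℕ) : Prop :=
  2 ≤ m ∧ (∀ i, 1 ≤ i → i ≤ m → 0 < a i) ∧ dseq a m = 1 ∧
  ∀ i, 2 ≤ i → i ≤ m → ∃ c : ℕ → ℕ,
    a i / dseq a i = ∑ j ∈ Finset.Icc 1 (i - 1), c j * (a j / dseq a (i - 1))

/-- membership in the restricted exponent set `B(A_m)`. -/
def InB (m : ℕ) (a : ℕ → ℕ) (k : ℕ → ℕ) : Prop :=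
  (∀ j, (j = 0 ∨ m < j) → k j = 0) ∧
  ∀ i, 2 ≤ i → i ≤ m → k i ≤ dseq a (i - 1) / dseq a i - 1


lemma dseq_one (a : ℕ → ℕ) : dseq a 1 = a 1 := by simp [dseq]

lemma dseq_dvd (a : ℕ → ℕ) {i j : ℕ} (h1 : 1 ≤ j) (h2 : j ≤ i) : dseq a i ∣ a j :=
  Finset.gcd_dvd (Finset.mem_Icc.2 ⟨h1, h2⟩)

lemma dseq_succ (a : ℕ → ℕ) (i : ℕ) (h : 1 ≤ i) :
    dseq a (i+1) = Nat.gcd (a (i+1)) (dseq a i) := by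
  rw [dseq, ← Finset.insert_Icc_right_eq_Icc_add_one (by omega), Finset.gcd_insert]; rfl

lemma dseq_step_dvd (a : ℕ → ℕ) (i : ℕ) (h : 1 ≤ i) : dseq a (i+1) ∣ dseq a i := by
  rw [dseq_succ a i h]; exact Nat.gcd_dvd_right _ _

lemma dseq_pos (a : ℕ → ℕ) {i : ℕ} (ha : 0 < a 1) (hi : 1 ≤ i) : 0 < dseq a i :=
  Nat.pos_of_dvd_of_pos (dseq_dvd a le_rfl hi) ha

lemma coprime_ue (a : ℕ → ℕ) (i : ℕ) (h : 1 ≤ i) (ha : 0 < a 1) :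
    Nat.Coprime (a (i+1) / dseq a (i+1)) (dseq a i / dseq a (i+1)) := by
  have h1 := dseq_succ a i h
  have h2 : 0 < Nat.gcd (a (i+1)) (dseq a i) := h1 ▸ dseq_pos a ha (by omega)
  have := Nat.coprime_div_gcd_div_gcd (m := a (i+1)) (n := dseq a i) h2
  rwa [← h1] at this

/-- existence of the canonical box representation over ℤ -/
lemma exists_rep (m : ℕ) (a : ℕ → ℕ) (ha : 0 < a 1) :
    ∀ i, 1 ≤ i → i ≤ m → ∀ n : ℤ, (dseq a i : ℤ) ∣ n →
    ∃ (k1 : ℤ) (k : ℕ → ℕ), n = k1 * a 1 + ∑ j ∈ Finset.Icc 2 i, (k j : ℤ) * a j ∧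
      ∀ j, 2 ≤ j → j ≤ i → k j + 1 ≤ dseq a (j-1) / dseq a j := by
  intro i
  induction i with
  | zero => omega
  | succ i ih =>
    intro h1 h2 n hdvd
    rcases Nat.eq_zero_or_pos i with hi0 | hi1
    · subst hi0
      rw [dseq_one] at hdvd
      refine ⟨n / a 1, 0, ?_, by intro j; omega⟩
      rw [Finset.Icc_eq_empty (by omega), Finset.sum_empty, add_zero,
        Int.ediv_mul_cancel hdvd]
    · -- step
      set Di := dseq a (i+1) with hDi
      set D := dseq a i with hD
      set e := D / Di with he
      set u := a (i+1) / Di with hu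
      have hDipos : 0 < Di := dseq_pos a ha (by omega)
      have hDpos : 0 < D := dseq_pos a ha hi1
      have hdvdD : Di ∣ D := dseq_step_dvd a i hi1
      have hdvda : Di ∣ a (i+1) := dseq_dvd a (by omega) le_rfl
      have hepos : 0 < e := Nat.div_pos (Nat.le_of_dvd hDpos hdvdD) hDipos
      have heD : Di * e = D := Nat.mul_div_cancel' hdvdD
      have hua : Di * u = a (i+1) := Nat.mul_div_cancel' hdvda
      have hcop : Nat.Coprime u e := coprime_ue a i hi1 ha
      obtain ⟨n', rfl⟩ := hdvd
      -- find K with e ∣ n' - K * u, 0 ≤ K < e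
      have hcopZ : IsCoprime (u : ℤ) (e : ℤ) := by
        rw [Int.isCoprime_iff_gcd_eq_one]; exact_mod_cast hcop
      obtain ⟨x, y, hxy⟩ := hcopZ
      set K : ℤ := (n' * x) % e with hK
      have heZ : (0:ℤ) < e := by exact_mod_cast hepos
      have hK0 : 0 ≤ K := Int.emod_nonneg _ (by omega)
      have hKe : K < e := Int.emod_lt_of_pos _ heZ
      have hKdvd : (e:ℤ) ∣ n' - K * u := by
        have h5 : (e:ℤ) ∣ n' * x - K := Int.dvd_self_sub_of_emod_eq rfl
        obtain ⟨q, hq⟩ := h5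
        refine ⟨n' * y + q * u, ?_⟩
        linear_combination (u:ℤ) * hq - n' * hxy
      obtain ⟨q2, hq2⟩ := hKdvd
      have hrec : (D:ℤ) ∣ (Di : ℤ) * n' - K.toNat * a (i+1) := by
        refine ⟨q2, ?_⟩
        have h7 : ((K.toNat : ℤ)) = K := Int.toNat_of_nonneg hK0
        have h8 : ((a (i+1) : ℤ)) = (Di:ℤ) * u := by exact_mod_cast hua.symm
        have h9 : ((D:ℤ)) = (Di:ℤ) * e := by exact_mod_cast heD.symm
        rw [h7, h8, h9]
        linear_combination (Di:ℤ) * hq2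
      obtain ⟨k1, k, hrep, hbd⟩ := ih hi1 (by omega) _ hrec
      refine ⟨k1, Function.update k (i+1) K.toNat, ?_, ?_⟩
      · rw [show Finset.Icc 2 (i+1) = insert (i+1) (Finset.Icc 2 i) from
          (Finset.insert_Icc_right_eq_Icc_add_one (by omega)).symm,
          Finset.sum_insert (by simp), Function.update_self]
        rw [Finset.sum_congr rfl (fun j hj => by
          rw [Function.update_of_ne (by have := Finset.mem_Icc.1 hj; omega)])]
        linarith [hrep]
      · intro j hj1 hj2
        rcases Nat.lt_or_ge j (i+1) with hlt | hge
        · rw [Function.update_of_ne (by omega)]; exact hbd j hj1 (by omega)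
        · have hj : j = i + 1 := by omega
          subst hj
          rw [Function.update_self, show (i + 1) - 1 = i from rfl]
          show K.toNat + 1 ≤ e
          omega

lemma rep_unique (m : ℕ) (a : ℕ → ℕ) (ha : 0 < a 1) :
    ∀ i, 1 ≤ i → i ≤ m → ∀ (k1 k1' : ℤ) (k k' : ℕ → ℕ),
    (∀ j, 2 ≤ j → j ≤ i → k j + 1 ≤ dseq a (j-1) / dseq a j) →
    (∀ j, 2 ≤ j → j ≤ i → k' j + 1 ≤ dseq a (j-1) / dseq a j) →
    k1 * (a 1 : ℤ) + ∑ j ∈ Finset.Icc 2 i, (k j : ℤ) * a j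
      = k1' * a 1 + ∑ j ∈ Finset.Icc 2 i, (k' j : ℤ) * a j →
    k1 = k1' ∧ ∀ j, 2 ≤ j → j ≤ i → k j = k' j := by
  intro i
  induction i with
  | zero => omega
  | succ i ih =>
    intro h1 h2 k1 k1' k k' hbd hbd' heq
    rcases Nat.eq_zero_or_pos i with hi0 | hi1
    · subst hi0
      simp only [Finset.Icc_eq_empty (show ¬(2:ℕ) ≤ 0+1 by omega), Finset.sum_empty, add_zero] at heq
      have ha1 : (a 1 : ℤ) ≠ 0 := by exact_mod_cast ha.ne'
      exact ⟨mul_right_cancel₀ ha1 heq, by omega⟩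
    · set Di := dseq a (i+1) with hDi
      set D := dseq a i with hD
      set e := D / Di with he
      set u := a (i+1) / Di with hu
      have hDipos : 0 < Di := dseq_pos a ha (by omega)
      have hDpos : 0 < D := dseq_pos a ha hi1
      have hdvdD : Di ∣ D := dseq_step_dvd a i hi1
      have hdvda : Di ∣ a (i+1) := dseq_dvd a (by omega) le_rfl
      have hepos : 0 < e := Nat.div_pos (Nat.le_of_dvd hDpos hdvdD) hDipos
      have heD : Di * e = D := Nat.mul_div_cancel' hdvdD
      have hua : Di * u = a (i+1) := Nat.mul_div_cancel' hdvda
      have hcop : Nat.Coprime u e := coprime_ue a i hi1 ha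
      rw [show Finset.Icc 2 (i+1) = insert (i+1) (Finset.Icc 2 i) from
          (Finset.insert_Icc_right_eq_Icc_add_one (by omega)).symm,
          Finset.sum_insert (by simp), Finset.sum_insert (by simp)] at heq
      -- divisibility facts
      have h1dvd : (D:ℤ) ∣ (a 1 : ℤ) := Int.natCast_dvd_natCast.2 (dseq_dvd a le_rfl hi1)
      have hSdvd : ∀ kk : ℕ → ℕ, (D:ℤ) ∣ ∑ j ∈ Finset.Icc 2 i, (kk j : ℤ) * a j :=
        fun kk => Finset.dvd_sum (fun j hj => Dvd.dvd.mul_left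
          (Int.natCast_dvd_natCast.2 (dseq_dvd a (by have := Finset.mem_Icc.1 hj; omega)
            (Finset.mem_Icc.1 hj).2)) _)
      have key : ((k (i+1):ℤ) - k' (i+1)) * a (i+1)
          = (k1' - k1) * a 1 + (∑ j ∈ Finset.Icc 2 i, (k' j : ℤ) * a j
            - ∑ j ∈ Finset.Icc 2 i, (k j : ℤ) * a j) := by linear_combination heq
      have hdvd2 : (D:ℤ) ∣ ((k (i+1):ℤ) - k' (i+1)) * a (i+1) := by
        rw [key]; exact dvd_add (Dvd.dvd.mul_left h1dvd _) (dvd_sub (hSdvd k') (hSdvd k))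
      have hediv : (e:ℤ) ∣ ((k (i+1):ℤ) - k' (i+1)) * u := by
        have hrw : ((k (i+1):ℤ) - k' (i+1)) * a (i+1) = (Di:ℤ) * (((k (i+1):ℤ) - k' (i+1)) * u) := by
          have : ((a (i+1):ℤ)) = (Di:ℤ) * u := by exact_mod_cast hua.symm
          rw [this]; ring
        have hDrw : ((D:ℤ)) = (Di:ℤ) * e := by exact_mod_cast heD.symm
        rw [hrw, hDrw] at hdvd2
        exact (mul_dvd_mul_iff_left (by exact_mod_cast hDipos.ne' : (Di:ℤ) ≠ 0)).1 hdvd2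
      have hcopZ : IsCoprime (e : ℤ) (u : ℤ) := by
        rw [Int.isCoprime_iff_gcd_eq_one, Int.gcd_natCast_natCast, Nat.gcd_comm]
        exact hcop
      have hediff : (e:ℤ) ∣ ((k (i+1):ℤ) - k' (i+1)) := hcopZ.dvd_of_dvd_mul_right hediv
      have hk0 : k (i+1) = k' (i+1) := by
        have b1 : k (i+1) + 1 ≤ e := hbd (i+1) (by omega) le_rfl
        have b2 : k' (i+1) + 1 ≤ e := hbd' (i+1) (by omega) le_rfl
        have := Int.eq_zero_of_abs_lt_dvd hediff (by
          rw [abs_lt]; constructor <;> [push_cast; push_cast] <;> omega)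
        omega
      have heq2 : k1 * (a 1 : ℤ) + ∑ j ∈ Finset.Icc 2 i, (k j : ℤ) * a j
          = k1' * a 1 + ∑ j ∈ Finset.Icc 2 i, (k' j : ℤ) * a j := by
        rw [hk0] at heq; linarith [heq]
      obtain ⟨hk1, hrest⟩ := ih hi1 (by omega) k1 k1' k k'
        (fun j hj1 hj2 => hbd j hj1 (by omega)) (fun j hj1 hj2 => hbd' j hj1 (by omega)) heq2
      refine ⟨hk1, fun j hj1 hj2 => ?_⟩
      rcases Nat.lt_or_ge j (i+1) with hlt | hge
      · exact hrest j hj1 (by omega)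
      · have : j = i+1 := by omega
        subst this; exact hk0

/-- key multiplication of the telescopic relation: `e_i * a_i` lies in the
subsemigroup generated by the earlier generators. -/
lemma tele_mul (m : ℕ) (a : ℕ → ℕ) (h : Telescopic m a) (i : ℕ) (h1 : 1 ≤ i) (h2 : i + 1 ≤ m) :
    ∃ c' : ℕ → ℕ, (dseq a i / dseq a (i+1)) * a (i+1) = ∑ j ∈ Finset.Icc 1 i, c' j * a j := by
  obtain ⟨hm, hpos, hdm, htel⟩ := h
  obtain ⟨c', hc'⟩ := htel (i+1) (by omega) h2
  rw [show (i+1) - 1 = i from rfl] at hc'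
  refine ⟨c', ?_⟩
  have ha : 0 < a 1 := hpos 1 le_rfl (by omega)
  set Di := dseq a (i+1)
  set D := dseq a i
  have hdvdD : Di ∣ D := dseq_step_dvd a i h1
  have hdvda : Di ∣ a (i+1) := dseq_dvd a (by omega) le_rfl
  -- multiply hc' by D
  have hmul := congrArg (fun x => D * x) hc'
  simp only [Finset.mul_sum] at hmul
  have hL : D * (a (i+1) / Di) = (D / Di) * a (i+1) := by
    obtain ⟨s, hs⟩ := hdvdD
    obtain ⟨t, ht⟩ := hdvda
    have hDipos : 0 < Di := dseq_pos a ha (by omega)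
    rw [hs, ht, Nat.mul_div_cancel_left _ hDipos, Nat.mul_div_cancel_left _ hDipos]
    ring
  have hR : ∀ j ∈ Finset.Icc 1 i, D * (c' j * (a j / D)) = c' j * a j := by
    intro j hj
    have := Finset.mem_Icc.1 hj
    have hdj : D ∣ a j := dseq_dvd a this.1 this.2
    rw [show D * (c' j * (a j / D)) = c' j * (D * (a j / D)) by ring,
      Nat.mul_div_cancel' hdj]
  rw [hL] at hmul
  rw [hmul, Finset.sum_congr rfl hR]

/-- every semigroup element has a box representation (over ℕ). -/
lemma reduce (m : ℕ) (a : ℕ → ℕ) (h : Telescopic m a) :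
    ∀ i, 1 ≤ i → i ≤ m → ∀ c : ℕ → ℕ, ∃ (k1 : ℕ) (k : ℕ → ℕ),
      ∑ j ∈ Finset.Icc 1 i, c j * a j = k1 * a 1 + ∑ j ∈ Finset.Icc 2 i, k j * a j ∧
      ∀ j, 2 ≤ j → j ≤ i → k j + 1 ≤ dseq a (j-1) / dseq a j := by
  have ha : 0 < a 1 := h.2.1 1 le_rfl (le_trans one_le_two h.1)
  intro i
  induction i with
  | zero => omega
  | succ i ih =>
    intro h1 h2 c
    rcases Nat.eq_zero_or_pos i with hi0 | hi1
    · subst hi0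
      refine ⟨c 1, 0, ?_, by intro j; omega⟩
      simp [Finset.Icc_eq_empty (show ¬(2:ℕ) ≤ 1 by omega)]
    · set Di := dseq a (i+1) with hDi
      set D := dseq a i with hD
      set e := D / Di with he
      have hDipos : 0 < Di := dseq_pos a ha (by omega)
      have hDpos : 0 < D := dseq_pos a ha hi1
      have hepos : 0 < e := Nat.div_pos (Nat.le_of_dvd hDpos (dseq_step_dvd a i hi1)) hDipos
      obtain ⟨c', hc'⟩ := tele_mul m a h i hi1 h2
      set q := c (i+1) / e with hq
      set r := c (i+1) % e with hr
      have hqr : c (i+1) = e * q + r := (Nat.div_add_mod _ _).symm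
      have hrlt : r < e := Nat.mod_lt _ hepos
      -- main sum manipulation
      have hsplit : ∑ j ∈ Finset.Icc 1 (i+1), c j * a j
          = ∑ j ∈ Finset.Icc 1 i, (c j + q * c' j) * a j + r * a (i+1) := by
        rw [show Finset.Icc 1 (i+1) = insert (i+1) (Finset.Icc 1 i) from
          (Finset.insert_Icc_right_eq_Icc_add_one (by omega)).symm, Finset.sum_insert (by simp)]
        have : ∑ j ∈ Finset.Icc 1 i, (c j + q * c' j) * a j
            = ∑ j ∈ Finset.Icc 1 i, c j * a j + q * ∑ j ∈ Finset.Icc 1 i, c' j * a j := by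
          rw [Finset.mul_sum, ← Finset.sum_add_distrib]
          exact Finset.sum_congr rfl (fun j _ => by ring)
        rw [this, ← hc', hqr]
        ring
      obtain ⟨k1, k, hrep, hbd⟩ := ih hi1 (by omega) (fun j => c j + q * c' j)
      refine ⟨k1, Function.update k (i+1) r, ?_, ?_⟩
      · have hupd : ∑ j ∈ Finset.Icc 2 i, (Function.update k (i+1) r) j * a j
            = ∑ j ∈ Finset.Icc 2 i, k j * a j :=
          Finset.sum_congr rfl (fun j hj => by
            rw [Function.update_of_ne (by have := Finset.mem_Icc.1 hj; omega)])
        rw [hsplit, hrep,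
          show Finset.Icc 2 (i+1) = insert (i+1) (Finset.Icc 2 i) from
            (Finset.insert_Icc_right_eq_Icc_add_one (by omega)).symm,
          Finset.sum_insert (by simp), Function.update_self, hupd]
        ring
      · intro j hj1 hj2
        rcases Nat.lt_or_ge j (i+1) with hlt | hge
        · rw [Function.update_of_ne (by omega)]; exact hbd j hj1 (by omega)
        · have hj : j = i + 1 := by omega
          subst hj
          rw [Function.update_self, show (i + 1) - 1 = i from rfl]
          show r + 1 ≤ e
          omega

def SZ (m : ℕ) (a : ℕ → ℕ) (n : ℤ) : Prop :=
  ∃ (k1 : ℕ) (k : ℕ → ℕ), n = k1 * a 1 + ∑ j ∈ Finset.Icc 2 m, (k j : ℤ) * a j ∧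
    ∀ j, 2 ≤ j → j ≤ m → k j + 1 ≤ dseq a (j-1) / dseq a j

def Frob (m : ℕ) (a : ℕ → ℕ) : ℤ :=
  (∑ j ∈ Finset.Icc 2 m, ((dseq a (j-1) / dseq a j : ℕ) - 1 : ℤ) * a j) - a 1

lemma SZ_nonneg (m : ℕ) (a : ℕ → ℕ) (n : ℤ) (h : SZ m a n) : 0 ≤ n := by
  obtain ⟨k1, k, hrep, -⟩ := h
  rw [hrep]
  have : (0:ℤ) ≤ ∑ j ∈ Finset.Icc 2 m, (k j : ℤ) * a j :=
    Finset.sum_nonneg (fun j _ => mul_nonneg (Int.natCast_nonneg _) (Int.natCast_nonneg _))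
  positivity

lemma tricho (m : ℕ) (a : ℕ → ℕ) (h : Telescopic m a) (n : ℤ) :
    SZ m a n ↔ ¬ SZ m a (Frob m a - n) := by
  have ha : 0 < a 1 := h.2.1 1 le_rfl (le_trans one_le_two h.1)
  have hm : 2 ≤ m := h.1
  obtain ⟨k1, k, hrep, hbd⟩ := exists_rep m a ha m (by omega) le_rfl n
    (by rw [h.2.2.1]; exact ⟨n, by push_cast; ring⟩)
  set kbar : ℕ → ℕ := fun j => dseq a (j-1) / dseq a j - 1 - k j with hkbar
  have hbdbar : ∀ j, 2 ≤ j → j ≤ m → kbar j + 1 ≤ dseq a (j-1) / dseq a j := by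
    intro j hj1 hj2; have := hbd j hj1 hj2; simp only [hkbar]; omega
  have hsub : ∑ j ∈ Finset.Icc 2 m, (kbar j : ℤ) * a j
      = ∑ j ∈ Finset.Icc 2 m, ((dseq a (j-1) / dseq a j : ℕ) - 1 : ℤ) * a j
        - ∑ j ∈ Finset.Icc 2 m, (k j : ℤ) * a j := by
    rw [← Finset.sum_sub_distrib]
    refine Finset.sum_congr rfl (fun j hj => ?_)
    have hj' := Finset.mem_Icc.1 hj
    have hb := hbd j hj'.1 hj'.2
    have : ((kbar j : ℕ) : ℤ) = ((dseq a (j-1) / dseq a j : ℕ) : ℤ) - 1 - (k j : ℤ) := by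
      simp only [hkbar]; omega
    rw [this]; ring
  have hFrep : Frob m a - n = (-1 - k1) * a 1 + ∑ j ∈ Finset.Icc 2 m, (kbar j : ℤ) * a j := by
    rw [Frob, hrep, hsub]; ring
  have hdir1 : SZ m a n → 0 ≤ k1 := by
    rintro ⟨p1, p, hprep, hpbd⟩
    have := rep_unique m a ha m (by omega) le_rfl p1 k1 p k hpbd hbd (by rw [← hprep, ← hrep])
    omega
  have hdir2 : SZ m a (Frob m a - n) → k1 < 0 := by
    rintro ⟨p1, p, hprep, hpbd⟩
    have := rep_unique m a ha m (by omega) le_rfl p1 (-1 - k1) p kbar hpbd hbdbar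
      (by rw [← hprep, ← hFrep])
    omega
  have hdir3 : 0 ≤ k1 → SZ m a n :=
    fun hk => ⟨k1.toNat, k, by rw [hrep, Int.toNat_of_nonneg hk], hbd⟩
  have hdir4 : k1 < 0 → SZ m a (Frob m a - n) :=
    fun hk => ⟨(-1 - k1).toNat, kbar,
      by rw [hFrep, Int.toNat_of_nonneg (by omega)], hbdbar⟩
  constructor
  · intro hn hFn; exact absurd (hdir2 hFn) (not_lt.2 (hdir1 hn))
  · intro hFn; rcases lt_or_ge k1 0 with hk | hk
    · exact absurd (hdir4 hk) hFn
    · exact hdir3 hk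

lemma mem_iff_SZ (m : ℕ) (a : ℕ → ℕ) (h : Telescopic m a) (n : ℕ) :
    InSemigroup m a n ↔ SZ m a n := by
  have hm : 2 ≤ m := h.1
  constructor
  · rintro ⟨c, hc⟩
    obtain ⟨k1, k, hrep, hbd⟩ := reduce m a h m (by omega) le_rfl c
    exact ⟨k1, k, by rw [hc, hrep]; push_cast; ring, hbd⟩
  · rintro ⟨k1, k, hrep, hbd⟩
    refine ⟨fun j => if j = 1 then k1 else k j, ?_⟩
    have hins : Finset.Icc 1 m = insert 1 (Finset.Icc 2 m) :=
      (Finset.insert_Icc_add_one_left_eq_Icc (by omega)).symm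
    have : (n:ℤ) = ∑ j ∈ Finset.Icc 1 m, ((if j = 1 then k1 else k j) : ℕ) * (a j : ℤ) := by
      rw [hins, Finset.sum_insert (by simp), if_pos rfl,
        Finset.sum_congr rfl (fun j hj => by
          rw [if_neg (by have := Finset.mem_Icc.1 hj; omega)])]
      exact hrep
    exact_mod_cast this

open Classical in
noncomputable def Gam (G : Finset ℕ) (x : ℕ) : ℕ := (G.filter (fun u => u < x)).card

lemma Gam_mono (G : Finset ℕ) {x y : ℕ} (hxy : x ≤ y) : Gam G x ≤ Gam G y := by
  apply Finset.card_le_card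
  intro u hu
  simp only [Gam, Finset.mem_filter] at hu ⊢
  exact ⟨hu.1, by omega⟩

lemma Gam_zero (G : Finset ℕ) : Gam G 0 = 0 := by
  simp [Gam]

/-- The partition μ = (w_g - (g-1), …, w_1 - 0) attached to a telescopic sequence is
self-conjugate: its Young diagram is symmetric. -/
theorem stmt7 (m : ℕ) (a : ℕ → ℕ) (h : Telescopic m a)
    (g : ℕ) (hg : g = {n : ℕ | ¬ InSemigroup m a n}.ncard) (hg1 : 1 ≤ g)
    (w : ℕ → ℕ) (hmono : StrictMonoOn w (Set.Icc 1 g))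
    (hmem : ∀ i, 1 ≤ i → i ≤ g → ¬ InSemigroup m a (w i))
    (hsurj : ∀ n, ¬ InSemigroup m a n → ∃ i, 1 ≤ i ∧ i ≤ g ∧ w i = n) :
    (∀ j, 1 ≤ j → j ≤ g →
      ((Finset.Icc 1 g).filter fun i => j ≤ w (g + 1 - i) - (g - i)).card
        = w (g + 1 - j) - (g - j)) ∧
    (∀ j, g < j →
      ((Finset.Icc 1 g).filter fun i => j ≤ w (g + 1 - i) - (g - i)).card = 0) := by
  classical
  have hiff : ∀ n : ℕ, InSemigroup m a n ↔ SZ m a n := mem_iff_SZ m a h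
  have htr : ∀ n : ℤ, SZ m a n ↔ ¬ SZ m a (Frob m a - n) := tricho m a h
  -- a gap exists
  have hex : ∃ n : ℕ, ¬ InSemigroup m a n := by
    by_contra hno
    push_neg at hno
    have hempty : {n : ℕ | ¬ InSemigroup m a n} = ∅ := by
      ext n; simp [hno n]
    rw [hempty, Set.ncard_empty] at hg
    omega
  have hgapSZ : ∀ n : ℕ, ¬ InSemigroup m a n → SZ m a (Frob m a - n) := by
    intro n hn
    by_contra hc
    exact hn ((hiff n).2 ((htr n).2 hc))
  -- Frobenius number is a natural number
  have hF0 : 0 ≤ Frob m a := by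
    obtain ⟨n0, hn0⟩ := hex
    have h1 := SZ_nonneg _ _ _ (hgapSZ n0 hn0)
    have h2 : (0:ℤ) ≤ (n0:ℤ) := Int.natCast_nonneg _
    omega
  set Fn := (Frob m a).toNat with hFndef
  have hFnc : (Fn:ℤ) = Frob m a := Int.toNat_of_nonneg hF0
  have gap_le : ∀ n : ℕ, ¬ InSemigroup m a n → n ≤ Fn := by
    intro n hn
    have h1 := SZ_nonneg _ _ _ (hgapSZ n hn)
    omega
  have hsymm : ∀ n : ℕ, n ≤ Fn → (¬ InSemigroup m a n ↔ InSemigroup m a (Fn - n)) := by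
    intro n hn
    have hcast : ((Fn - n : ℕ) : ℤ) = Frob m a - n := by omega
    have h1 : SZ m a ((Fn - n : ℕ) : ℤ) ↔ SZ m a (Frob m a - n) := by rw [hcast]
    rw [hiff n, hiff (Fn - n), h1, htr n, not_not]
  -- the finite set of gaps
  set Gset : Finset ℕ := (Finset.range (Fn+1)).filter (fun n => ¬ InSemigroup m a n)
    with hGsetdef
  have hmemG : ∀ n : ℕ, n ∈ Gset ↔ ¬ InSemigroup m a n := by
    intro n
    rw [hGsetdef, Finset.mem_filter, Finset.mem_range]
    exact ⟨fun hh => hh.2, fun hh => ⟨Nat.lt_succ_of_le (gap_le n hh), hh⟩⟩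
  have hgcard : g = Gset.card := by
    rw [hg, show {n : ℕ | ¬ InSemigroup m a n} = ↑Gset by
      ext n; rw [Set.mem_setOf_eq, Finset.mem_coe, hmemG]]
    exact Set.ncard_coe_finset _
  -- basic w facts
  have hwlt : ∀ s t, 1 ≤ s → s ≤ g → 1 ≤ t → t ≤ g → (w s < w t ↔ s < t) := by
    intro s t hs1 hs2 ht1 ht2
    exact hmono.lt_iff_lt (Set.mem_Icc.2 ⟨hs1, hs2⟩) (Set.mem_Icc.2 ⟨ht1, ht2⟩)
  have hw_ge : ∀ t, 1 ≤ t → t ≤ g → t ≤ w t := by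
    intro t
    induction t with
    | zero => omega
    | succ t iht =>
      intro h1 h2
      rcases Nat.eq_zero_or_pos t with h0 | hpos
      · subst h0
        have h01 : InSemigroup m a 0 := ⟨fun _ => 0, by simp⟩
        have hne : w 1 ≠ 0 := fun he => (hmem 1 le_rfl h2) (by rw [he]; exact h01)
        have hr : w (0+1) = w 1 := rfl
        omega
      · have ha1 := iht hpos (by omega)
        have := (hwlt t (t+1) (by omega) (by omega) (by omega) h2).2 (by omega)
        omega
  -- counting gaps below w-points
  have hγΓ : ∀ x, ((Finset.Icc 1 g).filter (fun t => w t < x)).card = Gam Gset x := by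
    intro x
    apply Finset.card_bij (fun t _ => w t)
    · intro t ht
      simp only [Finset.mem_filter, Finset.mem_Icc] at ht
      simp only [Gam, Finset.mem_filter]
      exact ⟨(hmemG _).2 (hmem t ht.1.1 ht.1.2), ht.2⟩
    · intro t1 h1 t2 h2 heqw
      simp only [Finset.mem_filter, Finset.mem_Icc] at h1 h2
      exact hmono.injOn (Set.mem_Icc.2 h1.1) (Set.mem_Icc.2 h2.1) heqw
    · intro u hu
      simp only [Gam, Finset.mem_filter] at hu
      obtain ⟨t, ht1, ht2, ht3⟩ := hsurj u ((hmemG u).1 hu.1)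
      exact ⟨t, Finset.mem_filter.2 ⟨Finset.mem_Icc.2 ⟨ht1, ht2⟩, by rw [ht3]; exact hu.2⟩, ht3⟩
  have hγw : ∀ t, 1 ≤ t → t ≤ g → Gam Gset (w t) = t - 1 := by
    intro t ht1 ht2
    rw [← hγΓ]
    have heqf : (Finset.Icc 1 g).filter (fun u => w u < w t) = Finset.Icc 1 (t-1) := by
      ext u
      simp only [Finset.mem_filter, Finset.mem_Icc]
      constructor
      · rintro ⟨⟨hu1, hu2⟩, hlt⟩
        have := (hwlt u t hu1 hu2 ht1 ht2).1 hlt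
        exact ⟨hu1, by omega⟩
      · rintro ⟨hu1, hu2⟩
        exact ⟨⟨hu1, by omega⟩, (hwlt u t hu1 (by omega) ht1 ht2).2 (by omega)⟩
    rw [heqf, Nat.card_Icc]
    omega
  have hγw1 : ∀ t, 1 ≤ t → t ≤ g → Gam Gset (w t + 1) = t := by
    intro t ht1 ht2
    rw [← hγΓ]
    have heqf : (Finset.Icc 1 g).filter (fun u => w u < w t + 1) = Finset.Icc 1 t := by
      ext u
      simp only [Finset.mem_filter, Finset.mem_Icc]
      constructor
      · rintro ⟨⟨hu1, hu2⟩, hlt⟩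
        refine ⟨hu1, ?_⟩
        by_contra hc
        have := (hwlt t u ht1 ht2 hu1 hu2).2 (by omega)
        omega
      · rintro ⟨hu1, hu2⟩
        refine ⟨⟨hu1, by omega⟩, ?_⟩
        rcases Nat.eq_or_lt_of_le hu2 with he | hl
        · subst he; omega
        · have := (hwlt u t hu1 (by omega) ht1 ht2).2 hl
          omega
    rw [heqf, Nat.card_Icc]
    omega
  -- the symmetry count identity
  have hsym : ∀ x, x ≤ Fn + 1 → x + Gam Gset (Fn + 1 - x) = g + Gam Gset x := by
    intro x hx
    have ha1 : Gam Gset x = ((Finset.range x).filter (fun n => ¬ InSemigroup m a n)).card := by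
      unfold Gam
      congr 1
      ext n
      simp only [Finset.mem_filter, Finset.mem_range]
      constructor
      · intro hn
        exact ⟨hn.2, ((hmemG n).1 hn.1)⟩
      · intro hn
        exact ⟨(hmemG n).2 hn.2, hn.1⟩
    have ha2 : ((Finset.range x).filter (fun n => InSemigroup m a n)).card
        + ((Finset.range x).filter (fun n => ¬ InSemigroup m a n)).card = x := by
      rw [Finset.card_filter_add_card_filter_not, Finset.card_range]
    have hb : Gam Gset (Fn+1-x) + (Gset.filter (fun u => ¬ u < Fn+1-x)).card = g := by
      rw [hgcard]
      exact Finset.card_filter_add_card_filter_not _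
    have hc : ((Finset.range x).filter (fun n => InSemigroup m a n)).card
        = (Gset.filter (fun u => ¬ u < Fn+1-x)).card := by
      apply Finset.card_bij' (fun n _ => Fn - n) (fun u _ => Fn - u)
      · intro n hn
        simp only [Finset.mem_filter, Finset.mem_range] at hn
        have hnF : n ≤ Fn := by omega
        simp only [Finset.mem_filter]
        refine ⟨(hmemG _).2 ((hsymm (Fn - n) (by omega)).2 ?_), by omega⟩
        rw [show Fn - (Fn - n) = n by omega]
        exact hn.2
      · intro u hu
        simp only [Finset.mem_filter] at hu
        have huG := (hmemG u).1 hu.1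
        have huF : u ≤ Fn := gap_le u huG
        simp only [Finset.mem_filter, Finset.mem_range]
        exact ⟨by omega, (hsymm u huF).1 huG⟩
      · intro n hn
        simp only [Finset.mem_filter, Finset.mem_range] at hn
        omega
      · intro u hu
        simp only [Finset.mem_filter] at hu
        have huF : u ≤ Fn := gap_le u ((hmemG u).1 hu.1)
        omega
    omega
  have hF2g : Fn + 1 = 2 * g := by
    have h1 := hsym (Fn + 1) le_rfl
    rw [Nat.sub_self, Gam_zero] at h1
    have h2 : Gam Gset (Fn + 1) = g := by
      rw [hgcard]
      unfold Gam
      congr 1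
      apply Finset.filter_true_of_mem
      intro u hu
      have := gap_le u ((hmemG u).1 hu)
      omega
    omega
  -- the pointwise condition
  have hcond : ∀ t j, 1 ≤ t → t ≤ g → 1 ≤ j → j ≤ g →
      (j ≤ w t - (t-1) ↔ Fn - w (g+1-j) < w t) := by
    intro t j ht1 ht2 hj1 hj2
    set s := g + 1 - j with hsdef
    have hs1 : 1 ≤ s := by omega
    have hs2 : s ≤ g := by omega
    have hwtF : w t ≤ Fn := gap_le _ (hmem t ht1 ht2)
    have hwsF : w s ≤ Fn := gap_le _ (hmem s hs1 hs2)
    have h1 := hsym (w t) (by omega)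
    have h2 := hγw t ht1 ht2
    rcases lt_or_ge (Fn - w s) (w t) with hlt | hge
    · have hmo : Gam Gset (Fn + 1 - w t) ≤ Gam Gset (w s) := Gam_mono _ (by omega)
      have h3 := hγw s hs1 hs2
      omega
    · have hmo : Gam Gset (w s + 1) ≤ Gam Gset (Fn + 1 - w t) := Gam_mono _ (by omega)
      have h3 := hγw1 s hs1 hs2
      omega
  constructor
  · -- main case
    intro j hj1 hj2
    set s := g + 1 - j with hsdef
    have hs1 : 1 ≤ s := by omega
    have hs2 : s ≤ g := by omega
    have hwsF : w s ≤ Fn := gap_le _ (hmem s hs1 hs2)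
    have hws_ge : s ≤ w s := hw_ge s hs1 hs2
    -- reindex
    have hre : ((Finset.Icc 1 g).filter fun i => j ≤ w (g + 1 - i) - (g - i)).card
        = ((Finset.Icc 1 g).filter (fun t => j ≤ w t - (t-1))).card := by
      apply Finset.card_bij' (fun i _ => g+1-i) (fun t _ => g+1-t)
      · intro i hi
        simp only [Finset.mem_filter, Finset.mem_Icc] at hi ⊢
        refine ⟨⟨by omega, by omega⟩, ?_⟩
        have := hi.2
        omega
      · intro t ht
        simp only [Finset.mem_filter, Finset.mem_Icc] at ht ⊢
        refine ⟨⟨by omega, by omega⟩, ?_⟩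
        have := ht.2
        have hrw : g + 1 - (g + 1 - t) = t := by omega
        rw [hrw]
        omega
      · intro i hi
        simp only [Finset.mem_filter, Finset.mem_Icc] at hi
        omega
      · intro t ht
        simp only [Finset.mem_filter, Finset.mem_Icc] at ht
        omega
    have hfc : ((Finset.Icc 1 g).filter (fun t => j ≤ w t - (t-1)))
        = ((Finset.Icc 1 g).filter (fun t => ¬ w t < Fn - w s + 1)) := by
      apply Finset.filter_congr
      intro t ht
      simp only [Finset.mem_Icc] at ht
      have hcc := hcond t j ht.1 ht.2 hj1 hj2
      rw [← hsdef] at hcc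
      omega
    have hcount : ((Finset.Icc 1 g).filter (fun t => w t < Fn - w s + 1)).card
        + ((Finset.Icc 1 g).filter (fun t => ¬ w t < Fn - w s + 1)).card = g := by
      rw [Finset.card_filter_add_card_filter_not, Nat.card_Icc]
      omega
    have hγv := hγΓ (Fn - w s + 1)
    -- v := Fn - w s is in the semigroup
    have hvS : InSemigroup m a (Fn - w s) := (hsymm (w s) hwsF).1 (hmem s hs1 hs2)
    have hGv1 : Gam Gset (Fn - w s + 1) = Gam Gset (Fn - w s) := by
      unfold Gam
      congr 1
      apply Finset.filter_congr
      intro u hu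
      have hug : ¬ InSemigroup m a u := (hmemG u).1 hu
      have hne : u ≠ Fn - w s := fun he => hug (he ▸ hvS)
      omega
    have h2 := hsym (Fn - w s) (by omega)
    have h4 : Fn + 1 - (Fn - w s) = w s + 1 := by omega
    rw [h4, hγw1 s hs1 hs2] at h2
    rw [hre, hfc]
    omega
  · -- zero case
    intro j hj
    rw [Finset.card_eq_zero, Finset.filter_eq_empty_iff]
    intro i hi
    have hi' := Finset.mem_Icc.1 hi
    have ht1 : 1 ≤ g + 1 - i := by omega
    have ht2 : g + 1 - i ≤ g := by omega
    have h1 := hsym (w (g + 1 - i)) (by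
      have := gap_le _ (hmem (g+1-i) ht1 ht2); omega)
    have h2 := hγw (g+1-i) ht1 ht2
    omega
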